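/- Let t ≥ 2 be an integer, a an integer, and q a positive integer. Suppose that limsup_{H→∞} limsup_{M→∞} (1/log M) · ∑_{m=1}^{M} (1/m) · sup_Q |(1/H) · ∑_{h=1}^{H} λ(m+h) e((a/q)·(m+h)^t + Q(m+h))| = 0, where the supremum is over all real polynomials Q of degree at most t−1. Then limsup_{H→∞} limsup_{M→∞} (1/log M) · ∑_{m=1}^{M} (1/m) · sup_P |(1/H) · ∑_{h=1}^{H} λ(m+h) e(P(m+h))| = 0, where the supremum is over all real polynomials P of degree at most t−1. -/

import Mathlib

open Filter Finset Polynomial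

/-- The Liouville function `λ(n) = (-1)^Ω(n)`. -/
noncomputable def lio (n : ℕ) : ℝ := (-1 : ℝ) ^ n.primeFactorsList.length

/-- `e(t) = e^{2πit}`. -/
noncomputable def efn (t : ℝ) : ℂ := Complex.exp (2 * Real.pi * Complex.I * t)



lemma efn_add (x y : ℝ) : efn (x + y) = efn x * efn y := by
  rw [efn, efn, efn, ← Complex.exp_add]; push_cast; ring_nf

lemma efn_int (k : ℤ) : efn k = 1 := by
  have h := Complex.exp_int_mul_two_pi_mul_I k
  rw [efn]; rw [← h]; push_cast; ring_nf

lemma abs_efn (x : ℝ) : Norm.norm (efn x) = 1 := by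
  have : efn x = Complex.exp (((2 * Real.pi * x : ℝ) : ℂ) * Complex.I) := by
    rw [efn]; push_cast; ring_nf
  rw [this, Complex.norm_exp_ofReal_mul_I]

lemma efn_nat_mul (n : ℕ) (x : ℝ) : efn (n * x) = efn x ^ n := by
  rw [efn, efn, ← Complex.exp_nat_mul]; push_cast; ring_nf

lemma efn_eq_one_iff {x : ℝ} : efn x = 1 ↔ ∃ n : ℤ, x = n := by
  rw [efn, Complex.exp_eq_one_iff]
  constructor
  · rintro ⟨n, hn⟩
    refine ⟨n, ?_⟩
    have h2 : (2 * Real.pi * Complex.I : ℂ) ≠ 0 := by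
      simp [Real.pi_ne_zero, Complex.I_ne_zero]
    have : (x : ℂ) = (n : ℂ) := by
      apply mul_left_cancel₀ h2
      rw [hn]; push_cast; ring
    exact_mod_cast this
  · rintro ⟨n, rfl⟩; exact ⟨n, by push_cast; ring⟩

lemma efn_geom (q : ℕ) (hq : 0 < q) (k : ℤ) :
    ∑ r ∈ Finset.range q, efn ((r : ℝ) * ((k : ℝ) / q)) =
      if (q : ℤ) ∣ k then (q : ℂ) else 0 := by
  simp_rw [efn_nat_mul]
  by_cases hd : (q : ℤ) ∣ k
  · obtain ⟨d, rfl⟩ := hd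
    have h1 : ((q * d : ℤ) : ℝ) / q = (d : ℝ) := by
      have : (q : ℝ) ≠ 0 := by positivity
      push_cast; field_simp
    rw [h1, efn_int, if_pos ⟨d, rfl⟩]
    simp
  · have hne : efn ((k : ℝ) / q) ≠ 1 := by
      rw [Ne, efn_eq_one_iff]
      rintro ⟨n, hn⟩
      apply hd
      refine ⟨n, ?_⟩
      have : (q : ℝ) ≠ 0 := by positivity
      have : (k : ℝ) = q * n := by field_simp at hn; linarith [hn]
      exact_mod_cast this
    rw [geom_sum_eq hne]
    have hq1 : efn ((k : ℝ) / q) ^ q = 1 := by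
      rw [← efn_nat_mul]
      have : (q : ℝ) * ((k : ℝ) / q) = (k : ℝ) := by field_simp
      rw [this, efn_int]
    rw [hq1, if_neg hd]
    simp

lemma efn_add_int (x : ℝ) (k : ℤ) : efn (x + k) = efn x := by
  rw [efn_add, efn_int, mul_one]

noncomputable def fc (t : ℕ) (a : ℤ) (q : ℕ) (r : ℕ) : ℂ :=
  (q : ℂ)⁻¹ * ∑ s ∈ Finset.range q, efn (-(((a : ℝ) / q) * (s : ℝ) ^ t) - (r : ℝ) * s / q)

lemma abs_fc_le (t : ℕ) (a : ℤ) (q : ℕ) (hq : 0 < q) (r : ℕ) :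
    Norm.norm (fc t a q r) ≤ 1 := by
  rw [fc, norm_mul]
  have h1 : Norm.norm ((q : ℂ)⁻¹) = (q : ℝ)⁻¹ := by
    rw [norm_inv]; simp
  rw [h1]
  have h2 : Norm.norm (∑ s ∈ Finset.range q,
      efn (-(((a : ℝ) / q) * (s : ℝ) ^ t) - (r : ℝ) * s / q)) ≤ (q : ℝ) := by
    calc Norm.norm (∑ s ∈ Finset.range q,
          efn (-(((a : ℝ) / q) * (s : ℝ) ^ t) - (r : ℝ) * s / q))
        ≤ ∑ s ∈ Finset.range q,
            Norm.norm (efn (-(((a : ℝ) / q) * (s : ℝ) ^ t) - (r : ℝ) * s / q)) :=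
          norm_sum_le _ _
      _ = (q : ℝ) := by simp [abs_efn]
  calc (q : ℝ)⁻¹ * Norm.norm (∑ s ∈ Finset.range q,
          efn (-(((a : ℝ) / q) * (s : ℝ) ^ t) - (r : ℝ) * s / q))
      ≤ (q : ℝ)⁻¹ * q := mul_le_mul_of_nonneg_left h2 (by positivity)
    _ = 1 := by field_simp

lemma fourier_expansion (t : ℕ) (a : ℤ) (q : ℕ) (hq : 0 < q) (n : ℕ) :
    ∑ r ∈ Finset.range q, fc t a q r * efn ((r : ℝ) * n / q) =
      efn (-(((a : ℝ) / q) * (n : ℝ) ^ t)) := by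
  have hqR : (q : ℝ) ≠ 0 := by positivity
  have hqC : (q : ℂ) ≠ 0 := by exact_mod_cast Nat.cast_ne_zero.mpr hq.ne'
  calc ∑ r ∈ Finset.range q, fc t a q r * efn ((r : ℝ) * n / q)
      = (q : ℂ)⁻¹ * ∑ s ∈ Finset.range q, efn (-(((a : ℝ) / q) * (s : ℝ) ^ t)) *
          ∑ r ∈ Finset.range q, efn ((r : ℝ) * (((n : ℝ) - (s : ℝ)) / q)) := by
        simp_rw [fc, mul_assoc, ← Finset.mul_sum, Finset.sum_mul]
        rw [Finset.sum_comm]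
        congr 1
        refine Finset.sum_congr rfl fun s _ => ?_
        rw [Finset.mul_sum]
        refine Finset.sum_congr rfl fun r _ => ?_
        rw [← efn_add, ← efn_add]
        congr 1
        push_cast
        field_simp
        ring
    _ = (q : ℂ)⁻¹ * ∑ s ∈ Finset.range q, efn (-(((a : ℝ) / q) * (s : ℝ) ^ t)) *
          (if s = n % q then (q : ℂ) else 0) := by
        congr 1
        refine Finset.sum_congr rfl fun s hs => ?_
        have hg := efn_geom q hq ((n : ℤ) - (s : ℤ))
        push_cast at hg
        rw [hg]
        have hiff : ((q : ℤ) ∣ (n : ℤ) - (s : ℤ)) ↔ s = n % q := by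
          constructor
          · intro hdvd
            have hmem := Finset.mem_range.mp hs
            have h1 : s ≡ n [MOD q] := (Nat.modEq_iff_dvd).mpr hdvd
            calc s = s % q := (Nat.mod_eq_of_lt hmem).symm
              _ = n % q := h1
          · rintro rfl
            have h1 : n % q ≡ n [MOD q] := Nat.mod_modEq n q
            exact (Nat.modEq_iff_dvd).mp h1
        simp only [hiff]
    _ = (q : ℂ)⁻¹ * (efn (-(((a : ℝ) / q) * ((n % q : ℕ) : ℝ) ^ t)) * q) := by
        congr 1
        rw [Finset.sum_eq_single (n % q)]
        · simp
        · intro b _ hb; simp [hb]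
        · intro h; exact absurd (Finset.mem_range.mpr (Nat.mod_lt n hq)) h
    _ = efn (-(((a : ℝ) / q) * ((n % q : ℕ) : ℝ) ^ t)) := by
        field_simp
    _ = efn (-(((a : ℝ) / q) * (n : ℝ) ^ t)) := by
        obtain ⟨d, hd⟩ : (q : ℤ) ∣ ((n % q : ℕ) : ℤ) ^ t - (n : ℤ) ^ t := by
          have h1 : n % q ≡ n [MOD q] := Nat.mod_modEq n q
          have h2 := Nat.ModEq.dvd ((h1.pow t).symm)
          push_cast at h2
          exact h2
        have harg : -(((a : ℝ) / q) * ((n % q : ℕ) : ℝ) ^ t)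
            = -(((a : ℝ) / q) * (n : ℝ) ^ t) + ((-(a * d) : ℤ) : ℝ) := by
          have hdR : ((n % q : ℕ) : ℝ) ^ t = (n : ℝ) ^ t + (q : ℝ) * d := by
            have h4 : ((n % q : ℕ) : ℤ) ^ t = (n : ℤ) ^ t + (q : ℤ) * d := by linarith
            have h5 := congrArg (fun z : ℤ => (z : ℝ)) h4
            push_cast at h5
            exact h5
          rw [hdR]
          push_cast
          field_simp
          ring
        rw [harg, efn_add_int]

lemma abs_lio (n : ℕ) : Norm.norm ((lio n : ℂ)) = 1 := by
  rw [lio]; push_cast; rw [norm_pow]; simp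

lemma abs_inner_le_one (H m : ℕ) (φ : ℕ → ℝ) :
    Norm.norm ((H : ℂ)⁻¹ * ∑ h ∈ Finset.Icc 1 H, (lio (m + h) : ℂ) * efn (φ h)) ≤ 1 := by
  rw [norm_mul, norm_inv]
  have h1 : Norm.norm ((H : ℂ)) = (H : ℝ) := by simp
  rw [h1]
  have h2 : Norm.norm (∑ h ∈ Finset.Icc 1 H, (lio (m + h) : ℂ) * efn (φ h)) ≤ (H : ℝ) := by
    calc Norm.norm (∑ h ∈ Finset.Icc 1 H, (lio (m + h) : ℂ) * efn (φ h))
        ≤ ∑ h ∈ Finset.Icc 1 H, Norm.norm ((lio (m + h) : ℂ) * efn (φ h)) :=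
          norm_sum_le _ _
      _ = (H : ℝ) := by simp [map_mul, abs_lio, abs_efn, lio, abs_pow]
  rcases Nat.eq_zero_or_pos H with rfl | hH
  · simp
  · calc (H : ℝ)⁻¹ * Norm.norm (∑ h ∈ Finset.Icc 1 H, (lio (m + h) : ℂ) * efn (φ h))
        ≤ (H : ℝ)⁻¹ * H := mul_le_mul_of_nonneg_left h2 (by positivity)
      _ = 1 := by field_simp

section
variable (t : ℕ) (a : ℤ) (q : ℕ)

lemma key_sup_le (ht : 2 ≤ t) (hq : 0 < q) (m H : ℕ) :
    (⨆ P : {P : Polynomial ℝ // P.degree ≤ ((t - 1 : ℕ) : WithBot ℕ)},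
      Norm.norm ((H : ℂ)⁻¹ * ∑ h ∈ Finset.Icc 1 H,
        (lio (m + h) : ℂ) * efn (P.1.eval ((m + h : ℕ) : ℝ)))) ≤
    q * ⨆ Q : {Q : Polynomial ℝ // Q.degree ≤ ((t - 1 : ℕ) : WithBot ℕ)},
      Norm.norm ((H : ℂ)⁻¹ * ∑ h ∈ Finset.Icc 1 H,
        (lio (m + h) : ℂ) * efn (((a : ℝ) / (q : ℝ)) * ((m + h : ℕ) : ℝ) ^ t +
          Q.1.eval ((m + h : ℕ) : ℝ))) := by
  have hqR : (q : ℝ) ≠ 0 := by positivity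
  set ι := {P : Polynomial ℝ // P.degree ≤ ((t - 1 : ℕ) : WithBot ℕ)}
  have hne : Nonempty ι := ⟨⟨0, by simp⟩⟩
  set G : ι → ℝ := fun Q => Norm.norm ((H : ℂ)⁻¹ * ∑ h ∈ Finset.Icc 1 H,
      (lio (m + h) : ℂ) * efn (((a : ℝ) / (q : ℝ)) * ((m + h : ℕ) : ℝ) ^ t +
        Q.1.eval ((m + h : ℕ) : ℝ))) with hG
  have hbdd : BddAbove (Set.range G) := by
    refine ⟨1, ?_⟩
    rintro x ⟨Q, rfl⟩
    exact abs_inner_le_one H m _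
  have hSnonneg : 0 ≤ ⨆ Q : ι, G Q :=
    Real.iSup_nonneg fun Q => norm_nonneg _
  apply Real.iSup_le _ (by positivity)
  intro P
  -- the shifted polynomials
  have hdeg1 : (1 : WithBot ℕ) ≤ ((t - 1 : ℕ) : WithBot ℕ) := by
    have : (1 : ℕ) ≤ t - 1 := by omega
    exact_mod_cast this
  set Qr : ℕ → ι := fun r => ⟨P.1 + C ((r : ℝ) / q) * X,
    le_trans (Polynomial.degree_add_le _ _)
      (max_le P.2 (le_trans (Polynomial.degree_C_mul_X_le _) hdeg1))⟩ with hQr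
  -- pointwise Fourier expansion
  have expand : ∀ n : ℕ, efn (P.1.eval (n : ℝ)) =
      ∑ r ∈ Finset.range q, fc t a q r *
        efn (((a : ℝ) / (q : ℝ)) * (n : ℝ) ^ t + (Qr r).1.eval (n : ℝ)) := by
    intro n
    have step1 : ∀ r : ℕ,
        efn (((a : ℝ) / (q : ℝ)) * (n : ℝ) ^ t + (Qr r).1.eval (n : ℝ))
        = efn (((a : ℝ) / (q : ℝ)) * (n : ℝ) ^ t + P.1.eval (n : ℝ)) * efn ((r : ℝ) * n / q) := by
      intro r
      rw [← efn_add]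
      congr 1
      simp only [hQr, Polynomial.eval_add, Polynomial.eval_mul, Polynomial.eval_C,
        Polynomial.eval_X]
      ring
    simp_rw [step1]
    have step2 : ∀ r : ℕ,
        fc t a q r * (efn (((a : ℝ) / (q : ℝ)) * (n : ℝ) ^ t + P.1.eval (n : ℝ)) *
          efn ((r : ℝ) * n / q))
        = efn (((a : ℝ) / (q : ℝ)) * (n : ℝ) ^ t + P.1.eval (n : ℝ)) *
            (fc t a q r * efn ((r : ℝ) * n / q)) := fun r => by ring
    simp_rw [step2]
    rw [← Finset.mul_sum, fourier_expansion t a q hq n, ← efn_add]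
    congr 1
    ring
  have hsum : (H : ℂ)⁻¹ * ∑ h ∈ Finset.Icc 1 H, (lio (m + h) : ℂ) *
        efn (P.1.eval ((m + h : ℕ) : ℝ))
      = ∑ r ∈ Finset.range q, fc t a q r * ((H : ℂ)⁻¹ * ∑ h ∈ Finset.Icc 1 H,
          (lio (m + h) : ℂ) * efn (((a : ℝ) / (q : ℝ)) * ((m + h : ℕ) : ℝ) ^ t +
            (Qr r).1.eval ((m + h : ℕ) : ℝ))) := by
    calc (H : ℂ)⁻¹ * ∑ h ∈ Finset.Icc 1 H, (lio (m + h) : ℂ) *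
          efn (P.1.eval ((m + h : ℕ) : ℝ))
        = (H : ℂ)⁻¹ * ∑ h ∈ Finset.Icc 1 H, ∑ r ∈ Finset.range q, fc t a q r *
            ((lio (m + h) : ℂ) * efn (((a : ℝ) / (q : ℝ)) * ((m + h : ℕ) : ℝ) ^ t +
              (Qr r).1.eval ((m + h : ℕ) : ℝ))) := by
          congr 1
          refine Finset.sum_congr rfl fun h _ => ?_
          rw [expand (m + h), Finset.mul_sum]
          exact Finset.sum_congr rfl fun r _ => by ring
      _ = ∑ r ∈ Finset.range q, fc t a q r * ((H : ℂ)⁻¹ * ∑ h ∈ Finset.Icc 1 H,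
            (lio (m + h) : ℂ) * efn (((a : ℝ) / (q : ℝ)) * ((m + h : ℕ) : ℝ) ^ t +
              (Qr r).1.eval ((m + h : ℕ) : ℝ))) := by
          rw [Finset.sum_comm, Finset.mul_sum]
          refine Finset.sum_congr rfl fun r _ => ?_
          rw [Finset.mul_sum, Finset.mul_sum, Finset.mul_sum]
          exact Finset.sum_congr rfl fun h _ => by ring
  rw [hsum]
  calc Norm.norm (∑ r ∈ Finset.range q, fc t a q r * ((H : ℂ)⁻¹ * ∑ h ∈ Finset.Icc 1 H,
          (lio (m + h) : ℂ) * efn (((a : ℝ) / (q : ℝ)) * ((m + h : ℕ) : ℝ) ^ t +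
            (Qr r).1.eval ((m + h : ℕ) : ℝ))))
      ≤ ∑ r ∈ Finset.range q, Norm.norm (fc t a q r * ((H : ℂ)⁻¹ * ∑ h ∈ Finset.Icc 1 H,
          (lio (m + h) : ℂ) * efn (((a : ℝ) / (q : ℝ)) * ((m + h : ℕ) : ℝ) ^ t +
            (Qr r).1.eval ((m + h : ℕ) : ℝ)))) := norm_sum_le _ _
    _ = ∑ r ∈ Finset.range q, Norm.norm (fc t a q r) * G (Qr r) := by
          refine Finset.sum_congr rfl fun r _ => ?_
          rw [norm_mul]
    _ ≤ ∑ r ∈ Finset.range q, 1 * (⨆ Q : ι, G Q) := by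
          refine Finset.sum_le_sum fun r _ => ?_
          exact mul_le_mul (abs_fc_le t a q hq r) (le_ciSup hbdd (Qr r))
            (norm_nonneg _) zero_le_one
    _ = q * ⨆ Q : ι, G Q := by
          rw [Finset.sum_const, Finset.card_range]
          simp [nsmul_eq_mul]
end

lemma harm_le (M : ℕ) (hM : 1 ≤ M) :
    ∑ m ∈ Finset.Icc 1 M, (1 / (m : ℝ)) ≤ 1 + Real.log M := by
  induction M with
  | zero => omega
  | succ N ih =>
    rcases Nat.eq_zero_or_pos N with rfl | hN
    · norm_num
    · rw [Finset.sum_Icc_succ_top (by omega : 1 ≤ N + 1)]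
      have h1 := ih hN
      have hNR : (0 : ℝ) < N := by exact_mod_cast hN
      have h2 : Real.log N + 1 / ((N : ℝ) + 1) ≤ Real.log ((N : ℝ) + 1) := by
        have hlog : Real.log ((N : ℝ) / (N + 1)) ≤ (N : ℝ) / (N + 1) - 1 :=
          Real.log_le_sub_one_of_pos (by positivity)
        have hdiv : Real.log ((N : ℝ) / (N + 1)) = Real.log N - Real.log ((N : ℝ) + 1) :=
          Real.log_div (by positivity) (by positivity)
        have h3 : (N : ℝ) / (N + 1) - 1 = -(1 / ((N : ℝ) + 1)) := by field_simp; ring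
        linarith
      push_cast
      linarith

lemma log_ge_one {M : ℕ} (hM : 3 ≤ M) : 1 ≤ Real.log M := by
  have h3 : Real.exp 1 < 3 := by
    have := Real.exp_one_lt_d9
    linarith
  have h1 : (1 : ℝ) < Real.log 3 := (Real.lt_log_iff_exp_lt (by norm_num)).mpr h3
  have h2 : Real.log 3 ≤ Real.log M := by
    apply Real.log_le_log (by norm_num)
    exact_mod_cast hM
  linarith

lemma inner_nonneg (M : ℕ) (c : ℕ → ℝ) (hc : ∀ m, 0 ≤ c m) :
    0 ≤ (Real.log M)⁻¹ * ∑ m ∈ Finset.Icc 1 M, (1 / (m : ℝ)) * c m := by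
  apply mul_nonneg
  · exact inv_nonneg.mpr (Real.log_natCast_nonneg M)
  · exact Finset.sum_nonneg fun m _ => mul_nonneg (by positivity) (hc m)

lemma inner_le_two (M : ℕ) (hM : 3 ≤ M) (c : ℕ → ℝ) (hc : ∀ m, 0 ≤ c m)
    (hc1 : ∀ m, c m ≤ 1) :
    (Real.log M)⁻¹ * ∑ m ∈ Finset.Icc 1 M, (1 / (m : ℝ)) * c m ≤ 2 := by
  have hlog := log_ge_one hM
  have hinv : (Real.log M)⁻¹ ≤ 1 := by
    rw [inv_le_one_iff₀]; right; exact hlog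
  have hsum : ∑ m ∈ Finset.Icc 1 M, (1 / (m : ℝ)) * c m ≤ 1 + Real.log M := by
    calc ∑ m ∈ Finset.Icc 1 M, (1 / (m : ℝ)) * c m
        ≤ ∑ m ∈ Finset.Icc 1 M, (1 / (m : ℝ)) := by
          refine Finset.sum_le_sum fun m _ => ?_
          calc (1 / (m : ℝ)) * c m ≤ (1 / (m : ℝ)) * 1 :=
                mul_le_mul_of_nonneg_left (hc1 m) (by positivity)
            _ = 1 / (m : ℝ) := mul_one _
      _ ≤ 1 + Real.log M := harm_le M (by omega)
  have hlogpos : (0 : ℝ) < Real.log M := by linarith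
  calc (Real.log M)⁻¹ * ∑ m ∈ Finset.Icc 1 M, (1 / (m : ℝ)) * c m
      ≤ (Real.log M)⁻¹ * (1 + Real.log M) :=
        mul_le_mul_of_nonneg_left hsum (by positivity)
    _ = (Real.log M)⁻¹ + 1 := by
        rw [mul_add, mul_one, inv_mul_cancel₀ hlogpos.ne']
    _ ≤ 2 := by linarith

lemma limsup_reduction (q : ℕ) (hq : 0 < q) (f g : ℕ → ℕ → ℝ)
    (hf0 : ∀ H M, 0 ≤ f H M) (hg0 : ∀ H M, 0 ≤ g H M)
    (hf2 : ∀ H M, 3 ≤ M → f H M ≤ 2) (hg2 : ∀ H M, 3 ≤ M → g H M ≤ 2)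
    (hfg : ∀ H M, f H M ≤ q * g H M)
    (hyp : limsup (fun H => limsup (fun M => g H M) atTop) atTop = 0) :
    limsup (fun H => limsup (fun M => f H M) atTop) atTop = 0 := by
  have hqR : (0 : ℝ) ≤ q := by positivity
  -- boundedness facts at the M-level
  have bddf : ∀ H, IsBoundedUnder (· ≤ ·) atTop (fun M => f H M) :=
    fun H => ⟨2, eventually_map.mpr (eventually_atTop.mpr ⟨3, hf2 H⟩)⟩
  have bddg : ∀ H, IsBoundedUnder (· ≤ ·) atTop (fun M => g H M) :=
    fun H => ⟨2, eventually_map.mpr (eventually_atTop.mpr ⟨3, hg2 H⟩)⟩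
  have bddqg : ∀ H, IsBoundedUnder (· ≤ ·) atTop (fun M => (q : ℝ) * g H M) :=
    fun H => ⟨(q : ℝ) * 2, eventually_map.mpr ((eventually_atTop.mpr ⟨3, hg2 H⟩).mono
      fun M hM => mul_le_mul_of_nonneg_left hM hqR)⟩
  have cobddf : ∀ H, IsCoboundedUnder (· ≤ ·) atTop (fun M => f H M) :=
    fun H => (Filter.isBoundedUnder_of ⟨0, fun M => hf0 H M⟩ :
      IsBoundedUnder (· ≥ ·) atTop _).isCoboundedUnder_le
  have cobddg : ∀ H, IsCoboundedUnder (· ≤ ·) atTop (fun M => g H M) :=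
    fun H => (Filter.isBoundedUnder_of ⟨0, fun M => hg0 H M⟩ :
      IsBoundedUnder (· ≥ ·) atTop _).isCoboundedUnder_le
  -- M-level limsup bounds
  have hF0 : ∀ H, 0 ≤ limsup (fun M => f H M) atTop := fun H =>
    le_limsup_of_frequently_le (Frequently.of_forall fun M => hf0 H M) (bddf H)
  have hG0 : ∀ H, 0 ≤ limsup (fun M => g H M) atTop := fun H =>
    le_limsup_of_frequently_le (Frequently.of_forall fun M => hg0 H M) (bddg H)
  have hF2 : ∀ H, limsup (fun M => f H M) atTop ≤ 2 := fun H =>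
    limsup_le_of_le (cobddf H) (eventually_atTop.mpr ⟨3, hf2 H⟩)
  have hG2 : ∀ H, limsup (fun M => g H M) atTop ≤ 2 := fun H =>
    limsup_le_of_le (cobddg H) (eventually_atTop.mpr ⟨3, hg2 H⟩)
  -- step 1 : F H ≤ q * G H
  have step1 : ∀ H, limsup (fun M => f H M) atTop ≤
      (q : ℝ) * limsup (fun M => g H M) atTop := by
    intro H
    calc limsup (fun M => f H M) atTop
        ≤ limsup (fun M => (q : ℝ) * g H M) atTop :=
          limsup_le_limsup (Eventually.of_forall (hfg H)) (cobddf H) (bddqg H)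
      _ = (q : ℝ) * limsup (fun M => g H M) atTop := by
          have hmono : Monotone (fun x : ℝ => (q : ℝ) * x) :=
            fun x y hxy => mul_le_mul_of_nonneg_left hxy hqR
          have hcont : ContinuousAt (fun x : ℝ => (q : ℝ) * x)
              (limsup (fun M => g H M) atTop) :=
            (continuous_const.mul continuous_id).continuousAt
          have h := hmono.map_limsup_of_continuousAt (fun M => g H M) hcont (bddg H) (cobddg H)
          exact h.symm
  -- H-level
  have bddF : IsBoundedUnder (· ≤ ·) atTop (fun H => limsup (fun M => f H M) atTop) :=
    Filter.isBoundedUnder_of ⟨2, hF2⟩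
  have bddG : IsBoundedUnder (· ≤ ·) atTop (fun H => limsup (fun M => g H M) atTop) :=
    Filter.isBoundedUnder_of ⟨2, hG2⟩
  have cobddF : IsCoboundedUnder (· ≤ ·) atTop (fun H => limsup (fun M => f H M) atTop) :=
    (Filter.isBoundedUnder_of ⟨0, hF0⟩ : IsBoundedUnder (· ≥ ·) atTop _).isCoboundedUnder_le
  have cobddG : IsCoboundedUnder (· ≤ ·) atTop (fun H => limsup (fun M => g H M) atTop) :=
    (Filter.isBoundedUnder_of ⟨0, hG0⟩ : IsBoundedUnder (· ≥ ·) atTop _).isCoboundedUnder_le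
  have bddqG : IsBoundedUnder (· ≤ ·) atTop
      (fun H => (q : ℝ) * limsup (fun M => g H M) atTop) :=
    Filter.isBoundedUnder_of ⟨(q : ℝ) * 2, fun H => mul_le_mul_of_nonneg_left (hG2 H) hqR⟩
  apply le_antisymm
  · calc limsup (fun H => limsup (fun M => f H M) atTop) atTop
        ≤ limsup (fun H => (q : ℝ) * limsup (fun M => g H M) atTop) atTop :=
          limsup_le_limsup (Eventually.of_forall step1) cobddF bddqG
      _ = (q : ℝ) * limsup (fun H => limsup (fun M => g H M) atTop) atTop := by
          have hmono : Monotone (fun x : ℝ => (q : ℝ) * x) :=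
            fun x y hxy => mul_le_mul_of_nonneg_left hxy hqR
          have hcont : ContinuousAt (fun x : ℝ => (q : ℝ) * x)
              (limsup (fun H => limsup (fun M => g H M) atTop) atTop) :=
            (continuous_const.mul continuous_id).continuousAt
          have h := hmono.map_limsup_of_continuousAt
            (fun H => limsup (fun M => g H M) atTop) hcont bddG cobddG
          exact h.symm
      _ = 0 := by rw [hyp, mul_zero]
  · exact le_limsup_of_frequently_le (Frequently.of_forall hF0) bddF

lemma inner_fg (t : ℕ) (a : ℤ) (q : ℕ) (ht : 2 ≤ t) (hq : 0 < q) (H M : ℕ) :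
    (Real.log M)⁻¹ * ∑ m ∈ Finset.Icc 1 M, (1 / (m : ℝ)) *
        ⨆ P : {P : Polynomial ℝ // P.degree ≤ ((t - 1 : ℕ) : WithBot ℕ)},
          Norm.norm ((H : ℂ)⁻¹ * ∑ h ∈ Finset.Icc 1 H,
            (lio (m + h) : ℂ) * efn (P.1.eval ((m + h : ℕ) : ℝ)))
      ≤ q * ((Real.log M)⁻¹ * ∑ m ∈ Finset.Icc 1 M, (1 / (m : ℝ)) *
        ⨆ Q : {Q : Polynomial ℝ // Q.degree ≤ ((t - 1 : ℕ) : WithBot ℕ)},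
          Norm.norm ((H : ℂ)⁻¹ * ∑ h ∈ Finset.Icc 1 H,
            (lio (m + h) : ℂ) * efn (((a : ℝ) / (q : ℝ)) * ((m + h : ℕ) : ℝ) ^ t +
              Q.1.eval ((m + h : ℕ) : ℝ)))) := by
  calc (Real.log M)⁻¹ * ∑ m ∈ Finset.Icc 1 M, (1 / (m : ℝ)) *
        ⨆ P : {P : Polynomial ℝ // P.degree ≤ ((t - 1 : ℕ) : WithBot ℕ)},
          Norm.norm ((H : ℂ)⁻¹ * ∑ h ∈ Finset.Icc 1 H,
            (lio (m + h) : ℂ) * efn (P.1.eval ((m + h : ℕ) : ℝ)))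
      ≤ (Real.log M)⁻¹ * ∑ m ∈ Finset.Icc 1 M, (1 / (m : ℝ)) *
          ((q : ℝ) * ⨆ Q : {Q : Polynomial ℝ // Q.degree ≤ ((t - 1 : ℕ) : WithBot ℕ)},
            Norm.norm ((H : ℂ)⁻¹ * ∑ h ∈ Finset.Icc 1 H,
              (lio (m + h) : ℂ) * efn (((a : ℝ) / (q : ℝ)) * ((m + h : ℕ) : ℝ) ^ t +
                Q.1.eval ((m + h : ℕ) : ℝ)))) := by
        apply mul_le_mul_of_nonneg_left _ (inv_nonneg.mpr (Real.log_natCast_nonneg M))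
        refine Finset.sum_le_sum fun m _ => ?_
        exact mul_le_mul_of_nonneg_left (key_sup_le t a q ht hq m H) (by positivity)
    _ = q * ((Real.log M)⁻¹ * ∑ m ∈ Finset.Icc 1 M, (1 / (m : ℝ)) *
          ⨆ Q : {Q : Polynomial ℝ // Q.degree ≤ ((t - 1 : ℕ) : WithBot ℕ)},
            Norm.norm ((H : ℂ)⁻¹ * ∑ h ∈ Finset.Icc 1 H,
              (lio (m + h) : ℂ) * efn (((a : ℝ) / (q : ℝ)) * ((m + h : ℕ) : ℝ) ^ t +
                Q.1.eval ((m + h : ℕ) : ℝ)))) := by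
        rw [show (q : ℝ) * ((Real.log M)⁻¹ * ∑ m ∈ Finset.Icc 1 M, (1 / (m : ℝ)) *
            ⨆ Q : {Q : Polynomial ℝ // Q.degree ≤ ((t - 1 : ℕ) : WithBot ℕ)},
              Norm.norm ((H : ℂ)⁻¹ * ∑ h ∈ Finset.Icc 1 H,
                (lio (m + h) : ℂ) * efn (((a : ℝ) / (q : ℝ)) * ((m + h : ℕ) : ℝ) ^ t +
                  Q.1.eval ((m + h : ℕ) : ℝ)))) =
            (Real.log M)⁻¹ * ((q : ℝ) * ∑ m ∈ Finset.Icc 1 M, (1 / (m : ℝ)) *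
            ⨆ Q : {Q : Polynomial ℝ // Q.degree ≤ ((t - 1 : ℕ) : WithBot ℕ)},
              Norm.norm ((H : ℂ)⁻¹ * ∑ h ∈ Finset.Icc 1 H,
                (lio (m + h) : ℂ) * efn (((a : ℝ) / (q : ℝ)) * ((m + h : ℕ) : ℝ) ^ t +
                  Q.1.eval ((m + h : ℕ) : ℝ)))) from by ring]
        congr 1
        rw [Finset.mul_sum]
        exact Finset.sum_congr rfl fun m _ => by ring

theorem rational_leading_coefficient_reduction
    (t : ℕ) (ht : 2 ≤ t) (a : ℤ) (q : ℕ) (hq : 0 < q)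
    (hyp : Filter.limsup (fun H : ℕ =>
      Filter.limsup (fun M : ℕ =>
        (Real.log M)⁻¹ * ∑ m ∈ Finset.Icc 1 M, (1 / (m : ℝ)) *
          ⨆ Q : {Q : Polynomial ℝ // Q.degree ≤ ((t - 1 : ℕ) : WithBot ℕ)},
            Norm.norm ((H : ℂ)⁻¹ * ∑ h ∈ Finset.Icc 1 H,
              (lio (m + h) : ℂ) *
                efn (((a : ℝ) / (q : ℝ)) * ((m + h : ℕ) : ℝ) ^ t +
                  Q.1.eval ((m + h : ℕ) : ℝ))))
        Filter.atTop) Filter.atTop = 0) :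
    Filter.limsup (fun H : ℕ =>
      Filter.limsup (fun M : ℕ =>
        (Real.log M)⁻¹ * ∑ m ∈ Finset.Icc 1 M, (1 / (m : ℝ)) *
          ⨆ P : {P : Polynomial ℝ // P.degree ≤ ((t - 1 : ℕ) : WithBot ℕ)},
            Norm.norm ((H : ℂ)⁻¹ * ∑ h ∈ Finset.Icc 1 H,
              (lio (m + h) : ℂ) * efn (P.1.eval ((m + h : ℕ) : ℝ))))
        Filter.atTop) Filter.atTop = 0 := by
  exact limsup_reduction q hq
    (fun H M => (Real.log M)⁻¹ * ∑ m ∈ Finset.Icc 1 M, (1 / (m : ℝ)) *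
      ⨆ P : {P : Polynomial ℝ // P.degree ≤ ((t - 1 : ℕ) : WithBot ℕ)},
        Norm.norm ((H : ℂ)⁻¹ * ∑ h ∈ Finset.Icc 1 H,
          (lio (m + h) : ℂ) * efn (P.1.eval ((m + h : ℕ) : ℝ))))
    (fun H M => (Real.log M)⁻¹ * ∑ m ∈ Finset.Icc 1 M, (1 / (m : ℝ)) *
      ⨆ Q : {Q : Polynomial ℝ // Q.degree ≤ ((t - 1 : ℕ) : WithBot ℕ)},
        Norm.norm ((H : ℂ)⁻¹ * ∑ h ∈ Finset.Icc 1 H,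
          (lio (m + h) : ℂ) * efn (((a : ℝ) / (q : ℝ)) * ((m + h : ℕ) : ℝ) ^ t +
            Q.1.eval ((m + h : ℕ) : ℝ))))
    (fun H M => inner_nonneg M _ (fun m => Real.iSup_nonneg fun P => norm_nonneg _))
    (fun H M => inner_nonneg M _ (fun m => Real.iSup_nonneg fun Q => norm_nonneg _))
    (fun H M hM => inner_le_two M hM _
      (fun m => Real.iSup_nonneg fun P => norm_nonneg _)
      (fun m => Real.iSup_le (fun P => abs_inner_le_one H m _) zero_le_one))
    (fun H M hM => inner_le_two M hM _
      (fun m => Real.iSup_nonneg fun Q => norm_nonneg _)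
      (fun m => Real.iSup_le (fun Q => abs_inner_le_one H m _) zero_le_one))
    (fun H M => inner_fg t a q ht hq H M)
    hyp
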